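/- Consider M single-armed problems with value functions V_m^λ : S_m → ℝ each satisfying V_m^λ(π_m) = max_{a ∈ {0,1}} { R_{a}(π_m) − λa + β Σ_o Pr(o | π_m, a) V_m^λ(Γ_o(π_m)) }, and define V^λ(π) = Nλ/(1−β) + Σ_{m=1}^M V_m^λ(π_m). Then V^λ satisfies the Lagrangian-relaxed Bellman equation V^λ(π) = max_{a ∈ {0,1}^M} { Σ_m R_{a_m}(π_m) + λ(N − Σ_m a_m) + β Σ_o Pr(o|π,a) V^λ(Γ_o(π)) }, where observations are independent across arms: Pr(o|π,a) = Π_m Pr(o_m|π_m,a_m) and Γ_o acts componentwise. -/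

import Mathlib

open Finset in
private lemma pi_sum_prod {M : ℕ} {O : Fin M → Type} [∀ m, Fintype (O m)]
    (g : ∀ m, O m → ℝ) :
    ∑ o : ∀ m, O m, ∏ m, g m (o m) = ∏ m, ∑ x : O m, g m x :=
  (Fintype.prod_sum g).symm

open Finset in
private lemma pi_sum_prod_single {M : ℕ} {O : Fin M → Type} [∀ m, Fintype (O m)]
    (g : ∀ m, O m → ℝ) (hg : ∀ m, ∑ x, g m x = 1) (m' : Fin M) (F : O m' → ℝ) :
    ∑ o : ∀ m, O m, (∏ m, g m (o m)) * F (o m') = ∑ x : O m', g m' x * F x := by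
  classical
  have key := pi_sum_prod (Function.update g m' (fun x => g m' x * F x))
  have h1 : ∀ o : ∀ m, O m,
      (∏ m, Function.update g m' (fun x => g m' x * F x) m (o m))
        = (∏ m, g m (o m)) * F (o m') := by
    intro o
    rw [Finset.prod_eq_mul_prod_sdiff_singleton_of_mem (Finset.mem_univ m'),
        Finset.prod_eq_mul_prod_sdiff_singleton_of_mem (Finset.mem_univ m')
          (fun m => g m (o m))]
    rw [Function.update_self]
    have h2 : ∏ m ∈ Finset.univ \ {m'},
        Function.update g m' (fun x => g m' x * F x) m (o m)
        = ∏ m ∈ Finset.univ \ {m'}, g m (o m) := by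
      apply Finset.prod_congr rfl
      intro m hm
      rw [Function.update_of_ne]
      simp only [Finset.mem_sdiff, Finset.mem_singleton] at hm
      exact hm.2
    rw [h2]; ring
  have h3 : (∏ m, ∑ x : O m, Function.update g m' (fun x => g m' x * F x) m x)
      = ∑ x : O m', g m' x * F x := by
    rw [Finset.prod_eq_mul_prod_sdiff_singleton_of_mem (Finset.mem_univ m')]
    have h4 : ∏ m ∈ Finset.univ \ {m'},
        (∑ x : O m, Function.update g m' (fun x => g m' x * F x) m x) = 1 := by
      apply Finset.prod_eq_one
      intro m hm
      simp only [Finset.mem_sdiff, Finset.mem_singleton] at hm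
      rw [Function.update_of_ne hm.2]
      exact hg m
    rw [h4, Function.update_self, mul_one]
  rw [← h3, ← key]
  exact Finset.sum_congr rfl fun o _ => (h1 o).symm

theorem lagrangian_decoupling
    (M N : ℕ) (β lam : ℝ) (hβ : β ∈ Set.Ioo (0:ℝ) 1)
    (S O : Fin M → Type) [∀ m, Fintype (S m)] [∀ m, Fintype (O m)]
    (R : ∀ m : Fin M, Bool → S m → ℝ)
    (P : ∀ m : Fin M, S m → Bool → O m → ℝ)
    (Γ : ∀ m : Fin M, Bool → O m → S m → S m)
    (hPnn : ∀ m s a o, 0 ≤ P m s a o)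
    (hPsum : ∀ m s a, ∑ o : O m, P m s a o = 1)
    (Vm : ∀ m : Fin M, S m → ℝ)
    (hVm : ∀ m : Fin M, ∀ s : S m,
      Vm m s =
        max
          (R m false s + β * ∑ o : O m, P m s false o * Vm m (Γ m false o s))
          (R m true s - lam + β * ∑ o : O m, P m s true o * Vm m (Γ m true o s)))
    (V : (∀ m : Fin M, S m) → ℝ)
    (hV : ∀ π : ∀ m : Fin M, S m,
      V π = (N : ℝ) * lam / (1 - β) + ∑ m : Fin M, Vm m (π m)) :
    ∀ π : ∀ m : Fin M, S m,
      V π =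
        ⨆ a : Fin M → Bool,
          (∑ m : Fin M, R m (a m) (π m)) +
          lam * ((N : ℝ) - ∑ m : Fin M, (if a m then (1:ℝ) else 0)) +
          β * ∑ o : (∀ m : Fin M, O m),
                (∏ m : Fin M, P m (π m) (a m) (o m)) *
                V (fun m => Γ m (a m) (o m) (π m)) := by
  intro π
  classical
  obtain ⟨hβ0, hβ1⟩ := hβ
  set C : ℝ := (N : ℝ) * lam / (1 - β) with hCdef
  have hβne : (1 : ℝ) - β ≠ 0 := by linarith
  have hC : lam * N + β * C = C := by
    rw [hCdef]
    field_simp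
    ring
  set Q : ∀ m : Fin M, Bool → ℝ := fun m b =>
    R m b (π m) - lam * (if b then (1:ℝ) else 0)
      + β * ∑ x : O m, P m (π m) b x * Vm m (Γ m b x (π m)) with hQdef
  -- each arm's value equals max of Q
  have hVmQ : ∀ m, Vm m (π m) = max (Q m false) (Q m true) := by
    intro m
    rw [hVm m (π m)]
    simp [hQdef]
  -- the joint expression decouples
  have hstep : ∀ a : Fin M → Bool,
      (∑ m : Fin M, R m (a m) (π m)) +
          lam * ((N : ℝ) - ∑ m : Fin M, (if a m then (1:ℝ) else 0)) +
          β * ∑ o : (∀ m : Fin M, O m),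
                (∏ m : Fin M, P m (π m) (a m) (o m)) *
                V (fun m => Γ m (a m) (o m) (π m))
        = C + ∑ m, Q m (a m) := by
    intro a
    have hone : ∑ o : ∀ m, O m, ∏ m, P m (π m) (a m) (o m) = 1 := by
      rw [pi_sum_prod]
      exact Finset.prod_eq_one fun m _ => hPsum m (π m) (a m)
    have hsum : ∑ o : (∀ m : Fin M, O m),
        (∏ m : Fin M, P m (π m) (a m) (o m)) *
          V (fun m => Γ m (a m) (o m) (π m))
        = C + ∑ m, ∑ x : O m, P m (π m) (a m) x * Vm m (Γ m (a m) x (π m)) := by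
      have : ∀ o : ∀ m, O m,
          (∏ m : Fin M, P m (π m) (a m) (o m)) *
            V (fun m => Γ m (a m) (o m) (π m))
          = (∏ m : Fin M, P m (π m) (a m) (o m)) * C
            + ∑ m, (∏ m' : Fin M, P m' (π m') (a m') (o m')) *
                Vm m (Γ m (a m) (o m) (π m)) := by
        intro o
        rw [hV]
        rw [mul_add, Finset.mul_sum]
      rw [Finset.sum_congr rfl fun o _ => this o, Finset.sum_add_distrib,
        ← Finset.sum_mul, hone, one_mul, Finset.sum_comm]
      congr 1
      apply Finset.sum_congr rfl
      intro m _
      exact pi_sum_prod_single (fun m' => P m' (π m') (a m'))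
        (fun m' => hPsum m' (π m') (a m')) m
        (fun x => Vm m (Γ m (a m) x (π m)))
    rw [hsum]
    have hQsum : ∑ m, Q m (a m)
        = (∑ m, R m (a m) (π m)) - lam * (∑ m, (if a m then (1:ℝ) else 0))
          + β * ∑ m, ∑ x : O m, P m (π m) (a m) x * Vm m (Γ m (a m) x (π m)) := by
      simp only [hQdef]
      rw [Finset.sum_add_distrib, Finset.sum_sub_distrib, ← Finset.mul_sum,
        ← Finset.mul_sum]
    rw [hQsum]
    linear_combination hC
  -- conclude via sup computation
  rw [hV π]
  have hne : Nonempty (Fin M → Bool) := ⟨fun _ => false⟩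
  apply le_antisymm
  · -- choose optimal action
    set a0 : Fin M → Bool := fun m => decide (Q m false ≤ Q m true) with ha0
    have hopt : ∀ m, Q m (a0 m) = max (Q m false) (Q m true) := by
      intro m
      by_cases h : Q m false ≤ Q m true
      · simp [ha0, h, max_eq_right h]
      · simp [ha0, h, max_eq_left (le_of_not_ge h)]
    have hval : C + ∑ m, Vm m (π m)
        = (∑ m : Fin M, R m (a0 m) (π m)) +
          lam * ((N : ℝ) - ∑ m : Fin M, (if a0 m then (1:ℝ) else 0)) +
          β * ∑ o : (∀ m : Fin M, O m),
                (∏ m : Fin M, P m (π m) (a0 m) (o m)) *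
                V (fun m => Γ m (a0 m) (o m) (π m)) := by
      rw [hstep a0]
      congr 1
      exact Finset.sum_congr rfl fun m _ => by rw [hVmQ m, ← hopt m]
    rw [hval]
    exact le_ciSup (f := fun a : Fin M → Bool =>
      (∑ m : Fin M, R m (a m) (π m)) +
        lam * ((N : ℝ) - ∑ m : Fin M, (if a m then (1:ℝ) else 0)) +
        β * ∑ o : (∀ m : Fin M, O m),
              (∏ m : Fin M, P m (π m) (a m) (o m)) *
              V (fun m => Γ m (a m) (o m) (π m)))
      (Finite.bddAbove_range _) a0
  · apply ciSup_le
    intro a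
    rw [hstep a]
    gcongr with m hm
    rw [hVmQ m]
    cases h : a m
    · exact le_max_left _ _
    · exact le_max_right _ _
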